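/- Let K be a complex Hilbert space and let (T_k)_{k ∈ ℕ} be a sequence of invertible bounded operators on K with T_0 = id_K. Let H be the ℓ²-direct sum of countably many copies of K (H = lp (fun _ : ℕ => K) 2), and for i, j ∈ ℕ let T_{ij} ∈ B(H) be the bounded operator sending (ξ_n)_{n ∈ ℕ} to the vector whose i-th entry is T_i⁻¹(T_j ξ_j) and whose other entries are 0. Let A be the norm-closed linear span of {T_{ij} : i, j ∈ ℕ} in B(H), and set q_k = T_{kk}. Then A is a norm-closed subalgebra of B(H) which is topologically simple (its only norm-closed two-sided ideals are {0} and A), and each q_k is an algebraically minimal projection of A, i.e. q_k is a self-adjoint idempotent and q_k A q_k = ℂ q_k. -/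

import Mathlib

open Filter

noncomputable section

variable {K : Type*} [NormedAddCommGroup K] [InnerProductSpace ℂ K] [CompleteSpace K]

/-- `J` is a norm-closed two-sided ideal of the algebra (set) `A`. -/
def IsClosedIdealOf {H : Type*} [NormedAddCommGroup H] [NormedSpace ℂ H]
    (A J : Set (H →L[ℂ] H)) : Prop :=
  J ⊆ A ∧ IsClosed J ∧ (0 : H →L[ℂ] H) ∈ J ∧
    (∀ x ∈ J, ∀ y ∈ J, x + y ∈ J) ∧
    (∀ (c : ℂ), ∀ x ∈ J, c • x ∈ J) ∧
    (∀ j ∈ J, ∀ a ∈ A, j * a ∈ J ∧ a * j ∈ J)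

set_option linter.unusedSectionVars false

section AuxOMA


variable (T Tinv : ℕ → K →L[ℂ] K)
    (hTinv₁ : ∀ k, T k ∘L Tinv k = 1) (hTinv₂ : ∀ k, Tinv k ∘L T k = 1)
    (Tij : ℕ → ℕ → (lp (fun _ : ℕ => K) 2 →L[ℂ] lp (fun _ : ℕ => K) 2))
    (hTij : ∀ i j (ξ : lp (fun _ : ℕ => K) 2) (n : ℕ),
      (Tij i j ξ) n = if n = i then Tinv i (T j (ξ j)) else 0)

include hTij

include hTinv₁ in
theorem oma_mul (i j k l : ℕ) :
    Tij i j * Tij k l = if j = k then Tij i l else 0 := by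
  refine ContinuousLinearMap.ext fun ξ => lp.ext (funext fun n => ?_)
  have h1 : ∀ z, T j (Tinv j z) = z := fun z => by
    have := congrArg (fun S => S z) (hTinv₁ j); simpa using this
  by_cases hjk : j = k
  · subst hjk
    simp [ContinuousLinearMap.mul_apply, hTij, h1]
  · simp [ContinuousLinearMap.mul_apply, hTij, hjk, lp.coeFn_zero]

include hTinv₂ in
theorem oma_q_apply (k : ℕ) (η : lp (fun _ : ℕ => K) 2) (n : ℕ) :
    (Tij k k η) n = if n = k then η k else 0 := by
  have h2 : ∀ z, Tinv k (T k z) = z := fun z => by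
    have := congrArg (fun S => S z) (hTinv₂ k); simpa using this
  rw [hTij, h2]

include hTinv₂ in
theorem oma_zero (x : lp (fun _ : ℕ => K) 2 →L[ℂ] lp (fun _ : ℕ => K) 2)
    (h : ∀ i j, Tij i i * x * Tij j j = 0) : x = 0 := by
  have hq := oma_q_apply T Tinv hTinv₂ Tij hTij
  have hxq : ∀ j (η : lp (fun _ : ℕ => K) 2), x (Tij j j η) = 0 := by
    intro j η
    refine lp.ext (funext fun i => ?_)
    have h3 := congrArg (fun S => (S η) i) (h i j)
    simpa [ContinuousLinearMap.mul_apply, hq, lp.coeFn_zero] using h3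
  refine ContinuousLinearMap.ext fun ξ => ?_
  have hs : HasSum (fun j : ℕ => lp.single 2 j (ξ j)) ξ :=
    lp.hasSum_single (by norm_num) ξ
  have hs2 : HasSum (fun j : ℕ => x (lp.single 2 j (ξ j))) (x ξ) := hs.mapL x
  have hterm : ∀ j : ℕ, x (lp.single 2 j (ξ j)) = 0 := by
    intro j
    have hfix : Tij j j (lp.single 2 j (ξ j)) = lp.single 2 j (ξ j) := by
      refine lp.ext (funext fun n => ?_)
      rw [hq]
      by_cases hn : n = j
      · subst hn; simp [lp.single_apply_self]
      · simp [hn, lp.single_apply_ne 2 j _ hn]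
    rw [← hfix, hxq]
  simp only [hterm] at hs2
  simpa using hs2.unique hasSum_zero

include hTinv₁ in
theorem oma_compress (i j : ℕ)
    (a : lp (fun _ : ℕ => K) 2 →L[ℂ] lp (fun _ : ℕ => K) 2)
    (ha : a ∈ closure
      (↑(Submodule.span ℂ (Set.range fun p : ℕ × ℕ => Tij p.1 p.2)) :
        Set (lp (fun _ : ℕ => K) 2 →L[ℂ] lp (fun _ : ℕ => K) 2))) :
    ∃ c : ℂ, Tij i i * a * Tij j j = c • Tij i j := by
  have hmul := oma_mul T Tinv hTinv₁ Tij hTij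
  let M : Submodule ℂ (lp (fun _ : ℕ => K) 2 →L[ℂ] lp (fun _ : ℕ => K) 2) :=
    Submodule.span ℂ {Tij i j}
  have hMclosed : IsClosed (M : Set (lp (fun _ : ℕ => K) 2 →L[ℂ] lp (fun _ : ℕ => K) 2)) :=
    Submodule.closed_of_finiteDimensional M
  have hf : Continuous (fun b : lp (fun _ : ℕ => K) 2 →L[ℂ] lp (fun _ : ℕ => K) 2 =>
      Tij i i * b * Tij j j) :=
    (continuous_const.mul continuous_id).mul continuous_const
  have hmaps : Set.MapsTo (fun b => Tij i i * b * Tij j j)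
      (↑(Submodule.span ℂ (Set.range fun p : ℕ × ℕ => Tij p.1 p.2)))
      (M : Set (lp (fun _ : ℕ => K) 2 →L[ℂ] lp (fun _ : ℕ => K) 2)) := by
    intro b hb
    induction hb using Submodule.span_induction with
    | mem v hv =>
        obtain ⟨⟨k, l⟩, rfl⟩ := hv
        simp only [Set.mem_setOf_eq]
        show Tij i i * Tij k l * Tij j j ∈ M
        rw [hmul i i k l]
        by_cases hik : i = k
        · rw [if_pos hik, hmul i l j j]
          by_cases hlj : l = j
          · rw [if_pos hlj]
            exact Submodule.mem_span_singleton_self _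
          · rw [if_neg hlj]; exact zero_mem M
        · rw [if_neg hik, zero_mul]; exact zero_mem M
    | zero => show Tij i i * 0 * Tij j j ∈ M; rw [mul_zero, zero_mul]; exact zero_mem M
    | add u v hu hv h1 h2 =>
        show Tij i i * (u + v) * Tij j j ∈ M
        rw [mul_add, add_mul]
        exact add_mem h1 h2
    | smul c u hu h1 =>
        show Tij i i * (c • u) * Tij j j ∈ M
        rw [mul_smul_comm, smul_mul_assoc]
        exact Submodule.smul_mem M c h1
  have := map_mem_closure hf ha hmaps
  rw [hMclosed.closure_eq] at this
  obtain ⟨c, hc⟩ := Submodule.mem_span_singleton.mp this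
  exact ⟨c, hc.symm⟩

end AuxOMA

/-- The 1-matricial algebra determined by a sequence of invertible operators `T_k` on `K`
with `T_0 = 1`, i.e. the norm-closed span of the matrix units
`T_{ij} = E_{ij} ⊗ T_i⁻¹ T_j` on `H = ℓ²(ℕ, K)`, is a norm-closed topologically simple
subalgebra of `B(H)` in which each `q_k = T_{kk}` is an algebraically minimal projection. -/
theorem one_matricial_algebra_topologically_simple
    (T Tinv : ℕ → K →L[ℂ] K)
    (hT0 : T 0 = 1)
    (hTinv₁ : ∀ k, T k ∘L Tinv k = 1) (hTinv₂ : ∀ k, Tinv k ∘L T k = 1)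
    (Tij : ℕ → ℕ → (lp (fun _ : ℕ => K) 2 →L[ℂ] lp (fun _ : ℕ => K) 2))
    (hTij : ∀ i j (ξ : lp (fun _ : ℕ => K) 2) (n : ℕ),
      (Tij i j ξ) n = if n = i then Tinv i (T j (ξ j)) else 0)
    (A : Set (lp (fun _ : ℕ => K) 2 →L[ℂ] lp (fun _ : ℕ => K) 2))
    (hA : A = closure
      (↑(Submodule.span ℂ (Set.range fun p : ℕ × ℕ => Tij p.1 p.2)) :
        Set (lp (fun _ : ℕ => K) 2 →L[ℂ] lp (fun _ : ℕ => K) 2))) :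
    -- `A` is a norm-closed subalgebra of `B(H)`
    (IsClosed A ∧ (0 : lp (fun _ : ℕ => K) 2 →L[ℂ] lp (fun _ : ℕ => K) 2) ∈ A ∧
      (∀ x ∈ A, ∀ y ∈ A, x + y ∈ A) ∧ (∀ (c : ℂ), ∀ x ∈ A, c • x ∈ A) ∧
      (∀ x ∈ A, ∀ y ∈ A, x * y ∈ A)) ∧
    -- `A` is topologically simple
    (∀ J : Set (lp (fun _ : ℕ => K) 2 →L[ℂ] lp (fun _ : ℕ => K) 2),
      IsClosedIdealOf A J → J = {0} ∨ J = A) ∧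
    -- each `q_k = T_{kk}` is an algebraically minimal projection of `A`
    (∀ k : ℕ, Tij k k ∈ A ∧ IsSelfAdjoint (Tij k k) ∧ Tij k k * Tij k k = Tij k k ∧
      {y | ∃ a ∈ A, y = Tij k k * a * Tij k k} = {y | ∃ c : ℂ, y = c • Tij k k}) := by
  subst hA
  have hmul := oma_mul T Tinv hTinv₁ Tij hTij
  have hq := oma_q_apply T Tinv hTinv₂ Tij hTij
  set V : Submodule ℂ (lp (fun _ : ℕ => K) 2 →L[ℂ] lp (fun _ : ℕ => K) 2) :=
    Submodule.span ℂ (Set.range fun p : ℕ × ℕ => Tij p.1 p.2) with hV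
  have hgen : ∀ k l, Tij k l ∈ V := fun k l => Submodule.subset_span ⟨(k, l), rfl⟩
  have hgenA : ∀ k l, Tij k l ∈ closure (V : Set (lp (fun _ : ℕ => K) 2 →L[ℂ] lp (fun _ : ℕ => K) 2)) := fun k l => subset_closure (hgen k l)
  -- the span is closed under multiplication
  have hVmul : ∀ x ∈ V, ∀ y ∈ V, x * y ∈ V := by
    intro x hx y hy
    induction hx, hy using Submodule.span_induction₂ with
    | mem_mem u v hu hv =>
        obtain ⟨⟨a, b⟩, rfl⟩ := hu; obtain ⟨⟨c, d⟩, rfl⟩ := hv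
        rw [hmul]
        split
        · exact hgen a d
        · exact zero_mem V
    | zero_left v hv => rw [zero_mul]; exact zero_mem V
    | zero_right u hu => rw [mul_zero]; exact zero_mem V
    | add_left x y z hx hy hz h1 h2 => rw [add_mul]; exact add_mem h1 h2
    | add_right x y z hx hy hz h1 h2 => rw [mul_add]; exact add_mem h1 h2
    | smul_left r x y hx hy h1 => rw [smul_mul_assoc]; exact Submodule.smul_mem V r h1
    | smul_right r x y hx hy h1 => rw [mul_smul_comm]; exact Submodule.smul_mem V r h1
  have hCmulR : ∀ y ∈ V, ∀ x ∈ closure (V : Set (lp (fun _ : ℕ => K) 2 →L[ℂ] lp (fun _ : ℕ => K) 2)), x * y ∈ closure (V : Set (lp (fun _ : ℕ => K) 2 →L[ℂ] lp (fun _ : ℕ => K) 2)) := by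
    intro y hy x hx
    exact map_mem_closure (f := fun b => b * y) (continuous_id.mul continuous_const) hx
      (fun b hb => hVmul b hb y hy)
  have hCmul : ∀ x ∈ closure (V : Set (lp (fun _ : ℕ => K) 2 →L[ℂ] lp (fun _ : ℕ => K) 2)), ∀ y ∈ closure (V : Set (lp (fun _ : ℕ => K) 2 →L[ℂ] lp (fun _ : ℕ => K) 2)),
      x * y ∈ closure (V : Set (lp (fun _ : ℕ => K) 2 →L[ℂ] lp (fun _ : ℕ => K) 2)) := by
    intro x hx y hy
    have h2 : Set.MapsTo (fun b => x * b)
        (V : Set (lp (fun _ : ℕ => K) 2 →L[ℂ] lp (fun _ : ℕ => K) 2))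
        (closure (V : Set (lp (fun _ : ℕ => K) 2 →L[ℂ] lp (fun _ : ℕ => K) 2))) :=
      fun b hb => hCmulR b hb x hx
    have := map_mem_closure (f := fun b => x * b) (continuous_const.mul continuous_id) hy h2
    simpa [closure_closure] using this
  have hCadd : ∀ x ∈ closure (V : Set (lp (fun _ : ℕ => K) 2 →L[ℂ] lp (fun _ : ℕ => K) 2)), ∀ y ∈ closure (V : Set (lp (fun _ : ℕ => K) 2 →L[ℂ] lp (fun _ : ℕ => K) 2)),
      x + y ∈ closure (V : Set (lp (fun _ : ℕ => K) 2 →L[ℂ] lp (fun _ : ℕ => K) 2)) := fun x hx y hy => V.topologicalClosure.add_mem hx hy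
  have hCsmul : ∀ (c : ℂ), ∀ x ∈ closure (V : Set (lp (fun _ : ℕ => K) 2 →L[ℂ] lp (fun _ : ℕ => K) 2)), c • x ∈ closure (V : Set (lp (fun _ : ℕ => K) 2 →L[ℂ] lp (fun _ : ℕ => K) 2)) :=
    fun c x hx => V.topologicalClosure.smul_mem c hx
  -- compressions are nonzero for nonzero elements
  refine ⟨⟨isClosed_closure, subset_closure (zero_mem V), hCadd, hCsmul, hCmul⟩, ?_, ?_⟩
  · -- topological simplicity
    intro J hJ
    obtain ⟨hJA, hJcl, hJ0, hJadd, hJsmul, hJmul⟩ := hJ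
    by_cases htriv : J = {0}
    · exact Or.inl htriv
    refine Or.inr ?_
    have hex : ∃ x ∈ J, x ≠ 0 := by
      by_contra hcon
      push_neg at hcon
      exact htriv (Set.eq_singleton_iff_unique_mem.mpr ⟨hJ0, fun x hx => hcon x hx⟩)
    obtain ⟨x, hxJ, hxne⟩ := hex
    have hxA := hJA hxJ
    obtain ⟨i, j, hij⟩ : ∃ i j, Tij i i * x * Tij j j ≠ 0 := by
      by_contra hcon
      push_neg at hcon
      exact hxne (oma_zero T Tinv hTinv₂ Tij hTij x hcon)
    obtain ⟨c, hc⟩ := oma_compress T Tinv hTinv₁ Tij hTij i j x hxA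
    rcases eq_or_ne c 0 with rfl | hcne
    · rw [zero_smul] at hc; exact absurd hc hij
    have hTijJ : Tij i j ∈ J := by
      have h1 : Tij i i * x ∈ J := (hJmul x hxJ (Tij i i) (hgenA i i)).2
      have h2 : Tij i i * x * Tij j j ∈ J := (hJmul _ h1 (Tij j j) (hgenA j j)).1
      have h3 : Tij i j = c⁻¹ • (Tij i i * x * Tij j j) := by
        rw [hc, smul_smul, inv_mul_cancel₀ hcne, one_smul]
      rw [h3]
      exact hJsmul _ _ h2
    have hall : ∀ k l, Tij k l ∈ J := by
      intro k l
      have e : Tij k l = Tij k i * Tij i j * Tij j l := by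
        rw [hmul k i i j, if_pos rfl, hmul k j j l, if_pos rfl]
      rw [e]
      exact (hJmul _ ((hJmul _ hTijJ _ (hgenA k i)).2) _ (hgenA j l)).1
    have hVJ : (V : Set (lp (fun _ : ℕ => K) 2 →L[ℂ] lp (fun _ : ℕ => K) 2)) ⊆ J := by
      intro v hv
      have hv' : v ∈ V := hv
      clear hv
      induction hv' using Submodule.span_induction with
      | mem u hu => obtain ⟨⟨k, l⟩, rfl⟩ := hu; exact hall k l
      | zero => exact hJ0
      | add x y hx hy h1 h2 => exact hJadd x h1 y h2
      | smul c x hx h1 => exact hJsmul c x h1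
    exact Set.Subset.antisymm hJA (closure_minimal hVJ hJcl)
  · -- minimal projections
    intro k
    refine ⟨hgenA k k, ?_, ?_, ?_⟩
    · rw [ContinuousLinearMap.isSelfAdjoint_iff_isSymmetric]
      intro ξ η
      show (inner ℂ (Tij k k ξ) η : ℂ) = inner ℂ ξ (Tij k k η)
      have l1 : (inner ℂ (Tij k k ξ) η : ℂ) = inner ℂ (ξ k) (η k) := by
        rw [lp.inner_eq_tsum, tsum_eq_single k ?_]
        · rw [hq]; simp
        · intro n hn; rw [hq]; simp [hn]
      have l2 : (inner ℂ ξ (Tij k k η) : ℂ) = inner ℂ (ξ k) (η k) := by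
        rw [lp.inner_eq_tsum, tsum_eq_single k ?_]
        · rw [hq]; simp
        · intro n hn; rw [hq]; simp [hn]
      rw [l1, l2]
    · rw [hmul k k k k, if_pos rfl]
    · ext y
      constructor
      · rintro ⟨a, ha, rfl⟩
        obtain ⟨c, hc⟩ := oma_compress T Tinv hTinv₁ Tij hTij k k a ha
        exact ⟨c, hc⟩
      · rintro ⟨c, rfl⟩
        refine ⟨c • Tij k k, hCsmul c _ (hgenA k k), ?_⟩
        rw [mul_smul_comm, hmul k k k k, if_pos rfl, smul_mul_assoc, hmul k k k k, if_pos rfl]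


end
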